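/- (Geodesic smoothness of the KL divergence on the Bures–Wasserstein manifold.) Fix κ ≥ 1 and let Σ₀, Σ₁ ∈ 𝒦_{1/√κ, √κ}. Let T := T_{Σ₀→Σ₁} and define the Bures–Wasserstein geodesic Σ_s := ((1−s) I_d + s T) Σ₀ ((1−s) I_d + s T) for s ∈ [0,1]. Let G(Σ) := (1/2)(tr Σ − ln det Σ − d). Then the function s ↦ G(Σ_s) is twice differentiable at s = 0 and its second derivative at s = 0 is at most 2√κ · W₂²(Σ₀, Σ₁). -/

import Mathlib

open Matrix
open scoped Classical

/-- Symmetric PSD square root of a positive semidefinite matrix (junk value `0` otherwise). -/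
noncomputable def msqrt {d : ℕ} (M : Matrix (Fin d) (Fin d) ℝ) : Matrix (Fin d) (Fin d) ℝ :=
  if h : M.PosSemidef then
    (h.1.eigenvectorUnitary : Matrix (Fin d) (Fin d) ℝ) *
      diagonal ((↑) ∘ Real.sqrt ∘ h.1.eigenvalues) *
      (star h.1.eigenvectorUnitary : Matrix (Fin d) (Fin d) ℝ) else 0

/-- Optimal transport map `T_{A→B} = A^{-1/2} (A^{1/2} B A^{1/2})^{1/2} A^{-1/2}`. -/
noncomputable def Tmap {d : ℕ} (A B : Matrix (Fin d) (Fin d) ℝ) : Matrix (Fin d) (Fin d) ℝ :=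
  (msqrt A)⁻¹ * msqrt (msqrt A * B * msqrt A) * (msqrt A)⁻¹

/-- Squared Bures–Wasserstein distance `tr(A + B - 2 (A^{1/2} B A^{1/2})^{1/2})`. -/
noncomputable def W2sq {d : ℕ} (A B : Matrix (Fin d) (Fin d) ℝ) : ℝ :=
  (A + B - (2 : ℝ) • msqrt (msqrt A * B * msqrt A)).trace

/-- Bures–Wasserstein distance. -/
noncomputable def W2 {d : ℕ} (A B : Matrix (Fin d) (Fin d) ℝ) : ℝ :=
  Real.sqrt (W2sq A B)

/-- Smallest eigenvalue of a (hermitian) matrix. -/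
noncomputable def lamMin {d : ℕ} (M : Matrix (Fin d) (Fin d) ℝ) : ℝ :=
  if h : M.IsHermitian then ⨅ i, h.eigenvalues i else 0

/-- Largest eigenvalue of a (hermitian) matrix. -/
noncomputable def lamMax {d : ℕ} (M : Matrix (Fin d) (Fin d) ℝ) : ℝ :=
  if h : M.IsHermitian then ⨆ i, h.eigenvalues i else 0

/-- `Kset a b` : symmetric positive definite matrices with all eigenvalues in `[a, b]`,
expressed via the Loewner order `a • I ⪯ S ⪯ b • I`. -/
def Kset {d : ℕ} (a b : ℝ) : Set (Matrix (Fin d) (Fin d) ℝ) :=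
  {S | S.PosDef ∧ (S - a • (1 : Matrix (Fin d) (Fin d) ℝ)).PosSemidef ∧
    (b • (1 : Matrix (Fin d) (Fin d) ℝ) - S).PosSemidef}

/-- Barycenter functional `F(S) = (1/(2N)) ∑ᵢ W₂²(S, Σᵢ)`. -/
noncomputable def Fbar {d N : ℕ} (Ss : Fin N → Matrix (Fin d) (Fin d) ℝ)
    (S : Matrix (Fin d) (Fin d) ℝ) : ℝ :=
  (1 / (2 * (N : ℝ))) * ∑ i, W2sq S (Ss i)

/-- Bures–Wasserstein gradient of the barycenter functional: `I - (1/N) ∑ᵢ T_{S→Σᵢ}`. -/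
noncomputable def gradF {d N : ℕ} (Ss : Fin N → Matrix (Fin d) (Fin d) ℝ)
    (S : Matrix (Fin d) (Fin d) ℝ) : Matrix (Fin d) (Fin d) ℝ :=
  1 - (N : ℝ)⁻¹ • ∑ i, Tmap S (Ss i)

/-- `‖A‖_S² = tr(A S A)`. -/
noncomputable def normAtSq {d : ℕ} (A S : Matrix (Fin d) (Fin d) ℝ) : ℝ :=
  (A * S * A).trace

/-- Entropic penalty `G(Σ) = (1/2)(tr Σ - ln det Σ - d)`
(the KL divergence of `N(0, Σ)` from `N(0, I)`). -/
noncomputable def Gent {d : ℕ} (S : Matrix (Fin d) (Fin d) ℝ) : ℝ :=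
  (1 / 2 : ℝ) * (S.trace - Real.log S.det - (d : ℝ))

/-- Entropically-regularized barycenter functional `F_γ = F + γ G`. -/
noncomputable def Freg {d N : ℕ} (γ : ℝ) (Ss : Fin N → Matrix (Fin d) (Fin d) ℝ)
    (S : Matrix (Fin d) (Fin d) ℝ) : ℝ :=
  Fbar Ss S + γ * Gent S

/-- Bures–Wasserstein gradient of `F_γ`: `∇F(Σ) + γ (I - Σ⁻¹)`. -/
noncomputable def gradFreg {d N : ℕ} (γ : ℝ) (Ss : Fin N → Matrix (Fin d) (Fin d) ℝ)
    (S : Matrix (Fin d) (Fin d) ℝ) : Matrix (Fin d) (Fin d) ℝ :=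
  gradF Ss S + γ • (1 - S⁻¹)


section AuxLemmas
open Matrix

private lemma psd_trace_nonneg' {d : ℕ} {M : Matrix (Fin d) (Fin d) ℝ} (hM : M.PosSemidef) :
    0 ≤ M.trace := by
  exact hM.trace_nonneg

private lemma sandwich_trace_nonneg' {d : ℕ} {B X : Matrix (Fin d) (Fin d) ℝ}
    (hB : B.IsHermitian) (hX : X.PosSemidef) : 0 ≤ (B * X * B).trace := by
  have h := hX.mul_mul_conjTranspose_same B
  rw [hB.eq] at h
  exact psd_trace_nonneg' h

private lemma msqrt_psd' {d : ℕ} {M : Matrix (Fin d) (Fin d) ℝ} (h : M.PosSemidef) :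
    (msqrt M).PosSemidef := by
  rw [msqrt, dif_pos h]
  have hD : (diagonal ((↑) ∘ Real.sqrt ∘ h.1.eigenvalues) : Matrix (Fin d) (Fin d) ℝ).PosSemidef := by
    rw [posSemidef_diagonal_iff]; intro i; simp [Real.sqrt_nonneg]
  have := hD.mul_mul_conjTranspose_same (h.1.eigenvectorUnitary : Matrix (Fin d) (Fin d) ℝ)
  simpa [Matrix.star_eq_conjTranspose] using this

private lemma msqrt_mul_self' {d : ℕ} {M : Matrix (Fin d) (Fin d) ℝ} (h : M.PosSemidef) :
    msqrt M * msqrt M = M := by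
  rw [msqrt, dif_pos h]
  set U : Matrix (Fin d) (Fin d) ℝ := (h.1.eigenvectorUnitary : Matrix (Fin d) (Fin d) ℝ) with hU
  have hUU' : star U * U = 1 := (Matrix.mem_unitaryGroup_iff').mp h.1.eigenvectorUnitary.2
  have hDD : (diagonal ((↑) ∘ Real.sqrt ∘ h.1.eigenvalues) : Matrix (Fin d) (Fin d) ℝ) *
      diagonal ((↑) ∘ Real.sqrt ∘ h.1.eigenvalues) = diagonal h.1.eigenvalues := by
    rw [diagonal_mul_diagonal]; congr 1; funext i
    simp [Real.mul_self_sqrt (h.eigenvalues_nonneg i)]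
  calc U * diagonal ((↑) ∘ Real.sqrt ∘ h.1.eigenvalues) * star U *
        (U * diagonal ((↑) ∘ Real.sqrt ∘ h.1.eigenvalues) * star U)
      = U * (diagonal ((↑) ∘ Real.sqrt ∘ h.1.eigenvalues) * ((star U * U) *
        diagonal ((↑) ∘ Real.sqrt ∘ h.1.eigenvalues))) * star U := by
        simp only [Matrix.mul_assoc]
    _ = U * diagonal h.1.eigenvalues * star U := by rw [hUU', Matrix.one_mul, hDD]
    _ = M := by
        conv_rhs => rw [h.1.spectral_theorem]
        simp [← hU]

private lemma det_one_add_smul_eig' {d : ℕ} {A : Matrix (Fin d) (Fin d) ℝ}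
    (hA : A.IsHermitian) (s : ℝ) :
    (1 + s • A).det = ∏ i, (1 + s * hA.eigenvalues i) := by
  set U : Matrix (Fin d) (Fin d) ℝ := (hA.eigenvectorUnitary : Matrix (Fin d) (Fin d) ℝ) with hU
  have hUU : U * star U = 1 := (Matrix.mem_unitaryGroup_iff).mp hA.eigenvectorUnitary.2
  have h2 : diagonal (fun i : Fin d => 1 + s * hA.eigenvalues i)
      = (1 : Matrix (Fin d) (Fin d) ℝ) + s • diagonal hA.eigenvalues := by
    ext i j
    rcases eq_or_ne i j with h | h <;> simp [Matrix.diagonal_apply, Matrix.one_apply, h]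
  have key : 1 + s • A = U * diagonal (fun i => 1 + s * hA.eigenvalues i) * star U := by
    rw [h2, Matrix.mul_add, Matrix.add_mul, Matrix.mul_one, hUU, Matrix.mul_smul, Matrix.smul_mul]
    congr 2
    conv_lhs => rw [hA.spectral_theorem]
    simp [Function.comp, ← hU]
  rw [key, det_mul, det_mul, mul_comm, ← mul_assoc, mul_comm (det (star U)), ← det_mul, hUU]
  simp [det_diagonal]

private lemma trace_sq_eq_sum_eig_sq' {d : ℕ} {A : Matrix (Fin d) (Fin d) ℝ}
    (hA : A.IsHermitian) : (A * A).trace = ∑ i, (hA.eigenvalues i)^2 := by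
  set U : Matrix (Fin d) (Fin d) ℝ := (hA.eigenvectorUnitary : Matrix (Fin d) (Fin d) ℝ) with hU
  have hUU' : star U * U = 1 := (Matrix.mem_unitaryGroup_iff').mp hA.eigenvectorUnitary.2
  set D : Matrix (Fin d) (Fin d) ℝ := diagonal hA.eigenvalues with hD
  have hAs : A = U * D * star U := by
    conv_lhs => rw [hA.spectral_theorem]
    simp [Function.comp, ← hU, hD]
  have key : A * A = U * (D * D) * star U := by
    rw [hAs]
    calc U * D * star U * (U * D * star U) = U * (D * ((star U * U) * D)) * star U := by
          simp only [Matrix.mul_assoc]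
      _ = U * (D * D) * star U := by rw [hUU']; simp [Matrix.mul_assoc]
  rw [key, Matrix.trace_mul_cycle, ← Matrix.mul_assoc, hUU', Matrix.one_mul]
  simp [hD, diagonal_mul_diagonal, trace_diagonal, pow_two]

private lemma trace_geodesic' {d : ℕ} (S0 A : Matrix (Fin d) (Fin d) ℝ) (s : ℝ) :
    ((1 + s • A) * S0 * (1 + s • A)).trace
      = S0.trace + 2 * s * (A * S0).trace + s^2 * (A * S0 * A).trace := by
  have expand : (1 + s • A) * S0 * (1 + s • A)
      = S0 + s • (A * S0) + s • (S0 * A) + (s^2) • (A * S0 * A) := by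
    simp only [Matrix.add_mul, Matrix.mul_add, Matrix.one_mul, Matrix.mul_one,
      Matrix.smul_mul, Matrix.mul_smul, smul_smul, pow_two]
    rw [smul_add, smul_smul]
    abel
  rw [expand]
  simp only [Matrix.trace_add, Matrix.trace_smul, smul_eq_mul]
  rw [Matrix.trace_mul_comm S0 A]
  ring

end AuxLemmas

/-- Geodesic `2√κ`-smoothness of the KL divergence `G` along the Bures–Wasserstein
geodesic from `S0` to `S1`. -/
theorem kl_geodesic_smoothness {d : ℕ} (κ : ℝ) (hκ : 1 ≤ κ)
    (S0 S1 : Matrix (Fin d) (Fin d) ℝ)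
    (h0 : S0 ∈ Kset (Real.sqrt κ)⁻¹ (Real.sqrt κ))
    (h1 : S1 ∈ Kset (Real.sqrt κ)⁻¹ (Real.sqrt κ))
    (g : ℝ → ℝ)
    (hg : g = fun s : ℝ =>
      Gent (((1 - s) • (1 : Matrix (Fin d) (Fin d) ℝ) + s • Tmap S0 S1) * S0 *
        ((1 - s) • (1 : Matrix (Fin d) (Fin d) ℝ) + s • Tmap S0 S1))) :
    DifferentiableAt ℝ g 0 ∧ DifferentiableAt ℝ (deriv g) 0 ∧
    deriv (deriv g) 0 ≤ 2 * Real.sqrt κ * W2sq S0 S1 := by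
  -- Notation and basic facts
  obtain ⟨hS0pd, hS0lo, hS0hi⟩ := h0
  obtain ⟨hS1pd, _, _⟩ := h1
  have hκ0 : (0:ℝ) < κ := lt_of_lt_of_le one_pos hκ
  have hsκ1 : (1:ℝ) ≤ Real.sqrt κ := by
    have := Real.sqrt_le_sqrt hκ
    rwa [Real.sqrt_one] at this
  have hsκpos : (0:ℝ) < Real.sqrt κ := lt_of_lt_of_le one_pos hsκ1
  set Q := msqrt S0 with hQ
  have hQpsd : Q.PosSemidef := msqrt_psd' hS0pd.posSemidef
  have hQQ : Q * Q = S0 := msqrt_mul_self' hS0pd.posSemidef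
  have hQu : IsUnit Q.det := by
    have hdet : Q.det * Q.det = S0.det := by rw [← det_mul, hQQ]
    have hpos : 0 < S0.det := hS0pd.det_pos
    refine isUnit_iff_ne_zero.mpr (fun h => ?_)
    rw [h, mul_zero] at hdet
    exact hpos.ne' hdet.symm
  have hQiQ : Q⁻¹ * Q = 1 := Matrix.nonsing_inv_mul _ hQu
  have hQQi : Q * Q⁻¹ = 1 := Matrix.mul_nonsing_inv _ hQu
  set R := msqrt (Q * S1 * Q) with hR
  have hMpsd : (Q * S1 * Q).PosSemidef := by
    have := hS1pd.posSemidef.mul_mul_conjTranspose_same Q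
    rwa [hQpsd.1.eq] at this
  have hRpsd : R.PosSemidef := msqrt_psd' hMpsd
  have hRR : R * R = Q * S1 * Q := msqrt_mul_self' hMpsd
  have hT : Tmap S0 S1 = Q⁻¹ * R * Q⁻¹ := rfl
  set T := Tmap S0 S1 with hTdef
  have hQiH : (Q⁻¹).IsHermitian := by
    have h := hQpsd.1
    unfold Matrix.IsHermitian at *
    rw [conjTranspose_nonsing_inv, h]
  have hTH : T.IsHermitian := by
    rw [hT]
    unfold Matrix.IsHermitian
    rw [conjTranspose_mul, conjTranspose_mul, hQiH.eq, hRpsd.1.eq, Matrix.mul_assoc]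
  set A := T - 1 with hA
  have hAH : A.IsHermitian := hTH.sub Matrix.isHermitian_one
  set μ := hAH.eigenvalues with hμ
  -- key algebraic identities
  have hTS0T : T * S0 * T = S1 := by
    rw [hT, ← hQQ]
    calc Q⁻¹ * R * Q⁻¹ * (Q * Q) * (Q⁻¹ * R * Q⁻¹)
        = Q⁻¹ * (R * ((Q⁻¹ * Q) * ((Q * Q⁻¹) * (R * Q⁻¹)))) := by simp only [Matrix.mul_assoc]
      _ = Q⁻¹ * (R * R) * Q⁻¹ := by rw [hQiQ, hQQi]; simp only [Matrix.mul_assoc, Matrix.one_mul]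
      _ = Q⁻¹ * (Q * S1 * Q) * Q⁻¹ := by rw [hRR]
      _ = (Q⁻¹ * Q) * S1 * (Q * Q⁻¹) := by simp only [Matrix.mul_assoc]
      _ = S1 := by rw [hQiQ, hQQi, Matrix.one_mul, Matrix.mul_one]
  have htrTS0 : (T * S0).trace = R.trace := by
    have h : T * S0 = Q⁻¹ * (R * Q) := by
      rw [hT, ← hQQ]
      calc Q⁻¹ * R * Q⁻¹ * (Q * Q) = Q⁻¹ * (R * ((Q⁻¹ * Q) * Q)) := by simp only [Matrix.mul_assoc]
        _ = Q⁻¹ * (R * Q) := by rw [hQiQ, Matrix.one_mul]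
    rw [h, Matrix.trace_mul_comm, Matrix.mul_assoc, hQQi, Matrix.mul_one]
  set c1 := (A * S0).trace with hc1
  set c2 := (A * S0 * A).trace with hc2
  have hW : W2sq S0 S1 = c2 := by
    have expand : A * S0 * A = T * S0 * T - T * S0 - S0 * T + S0 := by
      rw [hA]; noncomm_ring
    rw [hc2, expand]
    simp only [Matrix.trace_add, Matrix.trace_sub]
    rw [hTS0T, Matrix.trace_mul_comm S0 T, htrTS0]
    rw [W2sq]
    simp only [Matrix.trace_sub, Matrix.trace_add, Matrix.trace_smul, ← hQ, ← hR]
    simp only [smul_eq_mul]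
    ring
  -- trace inequalities
  have hc2nonneg : 0 ≤ c2 := sandwich_trace_nonneg' hAH hS0pd.posSemidef
  have htrAA : (A * A).trace = ∑ i, (μ i)^2 := trace_sq_eq_sum_eig_sq' hAH
  have hAAbound : (A * A).trace ≤ Real.sqrt κ * c2 := by
    have h5 : 0 ≤ (A * (S0 - (Real.sqrt κ)⁻¹ • 1) * A).trace :=
      sandwich_trace_nonneg' hAH hS0lo
    have hexp : A * (S0 - (Real.sqrt κ)⁻¹ • (1 : Matrix (Fin d) (Fin d) ℝ)) * A
        = A * S0 * A - (Real.sqrt κ)⁻¹ • (A * A) := by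
      simp only [Matrix.mul_sub, Matrix.sub_mul, Matrix.mul_smul, Matrix.smul_mul,
        Matrix.mul_one]
    rw [hexp, Matrix.trace_sub, Matrix.trace_smul, smul_eq_mul, sub_nonneg] at h5
    have := mul_le_mul_of_nonneg_left h5 hsκpos.le
    rwa [← mul_assoc, mul_inv_cancel₀ hsκpos.ne', one_mul] at this
  -- analytic part
  set c0 := (1/2 : ℝ) * (S0.trace - Real.log S0.det - (d:ℝ)) with hc0
  set F : ℝ → ℝ := fun s => c0 + c1 * s + (c2/2) * s^2 - ∑ i, Real.log (1 + s * μ i) with hF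
  set F' : ℝ → ℝ := fun s => c1 + c2 * s - ∑ i, μ i / (1 + s * μ i) with hF'
  have hE : ∀ᶠ s in nhds (0:ℝ), ∀ i, 0 < 1 + s * μ i := by
    rw [Filter.eventually_all]
    intro i
    have hc : ContinuousAt (fun s : ℝ => 1 + s * μ i) 0 := by fun_prop
    have h10 : (1:ℝ) + 0 * μ i = 1 := by ring
    rw [ContinuousAt, h10] at hc
    exact hc.eventually (eventually_gt_nhds one_pos)
  have hgeod : ∀ s : ℝ, (1 - s) • (1 : Matrix (Fin d) (Fin d) ℝ) + s • T = 1 + s • A := by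
    intro s
    rw [hA, smul_sub, sub_smul, one_smul]
    abel
  have geq : g =ᶠ[nhds (0:ℝ)] F := by
    filter_upwards [hE] with s hs
    have hP : 0 < ∏ i, (1 + s * μ i) := Finset.prod_pos (fun i _ => hs i)
    have hdetM : (1 + s • A).det = ∏ i, (1 + s * μ i) := det_one_add_smul_eig' hAH s
    rw [hg]
    show Gent ((((1:ℝ) - s) • 1 + s • T) * S0 * (((1:ℝ) - s) • 1 + s • T)) = F s
    rw [hgeod s, Gent]
    have htr := trace_geodesic' S0 A s
    have hdet : ((1 + s • A) * S0 * (1 + s • A)).det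
        = (∏ i, (1 + s * μ i)) * (∏ i, (1 + s * μ i)) * S0.det := by
      rw [det_mul, det_mul, hdetM]; ring
    have hlog : Real.log (((1 + s • A) * S0 * (1 + s • A)).det)
        = 2 * (∑ i, Real.log (1 + s * μ i)) + Real.log S0.det := by
      rw [hdet, Real.log_mul (by positivity) hS0pd.det_pos.ne',
        Real.log_mul hP.ne' hP.ne', Real.log_prod (fun i _ => (hs i).ne')]
      ring
    rw [htr, hlog, hF]
    simp only [hc0]
    ring
  have hder : ∀ s : ℝ, (∀ i, 0 < 1 + s * μ i) → HasDerivAt F (F' s) s := by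
    intro s hs
    have h1 : HasDerivAt (fun t : ℝ => c0 + c1 * t) c1 s := by
      simpa using ((hasDerivAt_id s).const_mul c1).const_add c0
    have h2 : HasDerivAt (fun t : ℝ => (c2/2) * t^2) (c2 * s) s := by
      have := (hasDerivAt_pow 2 s).const_mul (c2/2)
      exact this.congr_deriv (by norm_num; ring)
    have h3 : HasDerivAt (fun t : ℝ => ∑ i, Real.log (1 + t * μ i))
        (∑ i, μ i / (1 + s * μ i)) s := by
      apply HasDerivAt.fun_sum
      intro i _
      have hf : HasDerivAt (fun t : ℝ => 1 + t * μ i) (μ i) s :=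
        (hasDerivAt_mul_const (μ i)).const_add 1
      exact hf.log (hs i).ne'
    exact (h1.add h2).sub h3
  have h0pos : ∀ i, 0 < 1 + (0:ℝ) * μ i := by intro i; norm_num
  have hF2 : HasDerivAt F' (c2 + ∑ i, (μ i)^2) 0 := by
    have h2 : HasDerivAt (fun t : ℝ => c1 + c2 * t) c2 0 := by
      simpa using ((hasDerivAt_id (0:ℝ)).const_mul c2).const_add c1
    have h3 : HasDerivAt (fun t : ℝ => ∑ i, μ i / (1 + t * μ i)) (-∑ i, (μ i)^2) 0 := by
      rw [← Finset.sum_neg_distrib]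
      apply HasDerivAt.fun_sum
      intro i _
      have hf : HasDerivAt (fun t : ℝ => 1 + t * μ i) (μ i) 0 :=
        (hasDerivAt_mul_const (μ i)).const_add 1
      have := (hasDerivAt_const (0:ℝ) (μ i)).div hf (h0pos i).ne'
      exact this.congr_deriv (by norm_num [pow_two])
    have := h2.sub h3
    exact this.congr_deriv (by ring)
  have hdg : DifferentiableAt ℝ g 0 :=
    geq.differentiableAt_iff.mpr (hder 0 h0pos).differentiableAt
  have hder1 : deriv g =ᶠ[nhds (0:ℝ)] F' := by
    refine geq.deriv.trans ?_
    filter_upwards [hE] with s hs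
    exact (hder s hs).deriv
  have hddg : DifferentiableAt ℝ (deriv g) 0 :=
    hder1.differentiableAt_iff.mpr hF2.differentiableAt
  have hval : deriv (deriv g) 0 = c2 + ∑ i, (μ i)^2 := by
    rw [hder1.deriv_eq, hF2.deriv]
  refine ⟨hdg, hddg, ?_⟩
  rw [hval, hW]
  have hb1 : c2 ≤ Real.sqrt κ * c2 := le_mul_of_one_le_left hc2nonneg hsκ1
  have hb2 : ∑ i, (μ i)^2 ≤ Real.sqrt κ * c2 := htrAA ▸ hAAbound
  linarith
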